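/- If α = n/m is rational (m ≥ 1) and β is arbitrary, then the system (T², φ, Lebesgue) is not weakly mixing: the Koopman operator U has a nonconstant eigenfunction with eigenvalue of modulus 1. -/

import Mathlib

open MeasureTheory Finset

/-- The step function `θ` on the circle: `1` on `[0,1/2)`, `-1` on `[1/2,1)`. -/
noncomputable def triTheta (q : AddCircle (1:ℝ)) : ℝ :=
  if ((AddCircle.equivIco 1 0 q : ℝ)) < 1/2 then 1 else -1

/-- The triangle map `φ(q,p) = (q+p+αθ(q)+β, p+αθ(q)+β)` on the torus. -/
noncomputable def triMap (α β : ℝ) :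
    AddCircle (1:ℝ) × AddCircle (1:ℝ) → AddCircle (1:ℝ) × AddCircle (1:ℝ) :=
  fun x => (x.1 + x.2 + ((α * triTheta x.1 + β : ℝ) : AddCircle (1:ℝ)),
            x.2 + ((α * triTheta x.1 + β : ℝ) : AddCircle (1:ℝ)))

lemma toCircle_coe_pow (m : ℕ) (r : ℝ) :
    ((AddCircle.toCircle ((r : AddCircle (1:ℝ))) : Circle) : ℂ) ^ m
      = Complex.exp ((m : ℂ) * (2 * Real.pi * r * Complex.I)) := by
  rw [AddCircle.toCircle_apply_mk, Circle.coe_exp, ← Complex.exp_nat_mul]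
  norm_num

set_option maxHeartbeats 1000000 in
/-- If `α = n/m` is rational, the triangle map is not weakly mixing: its Koopman
operator has a nonconstant (measurable) eigenfunction with unimodular eigenvalue. -/
theorem triMap_not_weakMixing (α β : ℝ) (n : ℤ) (m : ℕ) (hm : 1 ≤ m)
    (hα : α = (n : ℝ) / m) :
    ∃ (f : AddCircle (1:ℝ) × AddCircle (1:ℝ) → ℂ) (c : ℂ),
      Measurable f ∧ ‖c‖ = 1 ∧
      (∀ x, f (triMap α β x) = c * f x) ∧
      ¬ ∃ z : ℂ, ∀ x, f x = z := by
  have hm0 : (m : ℝ) ≠ 0 := by positivity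
  have hmn : (m : ℝ) * α = n := by rw [hα]; field_simp
  have hmnC : (m : ℂ) * α = n := by exact_mod_cast congrArg (Complex.ofReal) hmn
  refine ⟨fun x => ((AddCircle.toCircle x.2 : Circle) : ℂ) ^ m,
    Complex.exp (((2 * Real.pi * ((m : ℝ) * β) : ℝ) : ℂ) * Complex.I), ?_, ?_, ?_, ?_⟩
  · exact ((continuous_subtype_val.comp AddCircle.continuous_toCircle).measurable.comp
      measurable_snd).pow_const m
  · exact Complex.norm_exp_ofReal_mul_I _
  · intro x
    have hθ : triTheta x.1 = 1 ∨ triTheta x.1 = -1 := by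
      unfold triTheta; split <;> simp
    simp only [triMap, AddCircle.toCircle_add, Circle.coe_mul, mul_pow]
    rw [toCircle_coe_pow, mul_comm]
    congr 1
    set θ := triTheta x.1 with hθdef
    set k : ℤ := if θ = 1 then n else -n with hk
    have harg : ((m : ℂ) * (2 * Real.pi * ((α * θ + β : ℝ) : ℂ) * Complex.I))
        = (k : ℂ) * (2 * Real.pi * Complex.I)
          + ((2 * Real.pi * ((m : ℝ) * β) : ℝ) : ℂ) * Complex.I := by
      rcases hθ with h | h
      · rw [hk, if_pos h, h]
        push_cast
        linear_combination (2 * (Real.pi : ℂ) * Complex.I) * hmnC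
      · rw [hk, if_neg (by rw [h]; norm_num), h]
        push_cast
        linear_combination (-(2 * (Real.pi : ℂ) * Complex.I)) * hmnC
    rw [harg, Complex.exp_add, Complex.exp_int_mul_two_pi_mul_I, one_mul]
  · rintro ⟨z, hz⟩
    have h0 := hz (0, ((0 : ℝ) : AddCircle (1:ℝ)))
    have h1 := hz (0, ((1 / (2 * m) : ℝ) : AddCircle (1:ℝ)))
    simp only at h0 h1
    rw [toCircle_coe_pow] at h0 h1
    norm_num at h0
    have harg1 : ((m : ℂ) * (2 * Real.pi * ((1 / (2 * (m:ℝ)) : ℝ) : ℂ) * Complex.I))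
        = (Real.pi : ℂ) * Complex.I := by
      have : ((m : ℂ)) ≠ 0 := by exact_mod_cast hm0
      push_cast
      field_simp
    rw [harg1, Complex.exp_pi_mul_I] at h1
    rw [← h0] at h1
    norm_num at h1
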